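/- Every integrable Sturm involution σ ∈ S(N) with N ≥ 3 contains either three consecutively ascending entries σ(m−1)+1 = σ(m) = σ(m+1)−1 or three consecutively descending entries σ(m−1)−1 = σ(m) = σ(m+1)+1 for some 1 < m < N; i.e., integrable Sturm involutions are always pitchforkable. -/

import Mathlib

/-- The formal Morse numbers of a permutation `σ` of `{1,…,N}` (encoded as a
permutation of `ℕ`): `i_j := ∑_{k=1}^{j-1} (-1)^{k+1} sign(σ⁻¹(k+1) - σ⁻¹(k))`. -/
def morse (σ : Equiv.Perm ℕ) (j : ℕ) : ℤ :=
  ∑ k ∈ Finset.Icc 1 (j - 1),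
    (-1 : ℤ) ^ (k + 1) * Int.sign ((σ⁻¹ (k + 1) : ℤ) - (σ⁻¹ k : ℤ))

/-- A 2-cycle `(a b)` (with `a < b`) of the involution `σ`. -/
def TwoCycle (σ : Equiv.Perm ℕ) (a b : ℕ) : Prop := a < b ∧ σ a = b

/-- A σ-stable fixed point: a fixed point whose formal Morse number is 0. -/
def StableFix (σ : Equiv.Perm ℕ) (e : ℕ) : Prop := σ e = e ∧ morse σ e = 0

/-- The σ-stable core of a 2-cycle `(a b)`: the σ-stable fixed points strictly
between `a` and `b`. -/
def Core (σ : Equiv.Perm ℕ) (a b : ℕ) : Set ℕ :=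
  {e | a < e ∧ e < b ∧ StableFix σ e}

/-- Two 2-cycles intersect if the corresponding open intervals intersect. -/
def Intersecting (a b c d : ℕ) : Prop := (Set.Ioo a b ∩ Set.Ioo c d).Nonempty

/-- Two 2-cycles are nested if one open interval strictly contains the other. -/
def Nested (a b c d : ℕ) : Prop := (a < c ∧ d < b) ∨ (c < a ∧ b < d)

/-- Two arcs `{a,b}` and `{c,d}` (of a stylized meander) cross. -/
def ArcsCross (a b c d : ℕ) : Prop :=
  (min a b < min c d ∧ min c d < max a b ∧ max a b < max c d) ∨
  (min c d < min a b ∧ min a b < max c d ∧ max c d < max a b)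


private lemma even_card_of_inv (f : ℕ → ℕ) : ∀ S : Finset ℕ,
    (∀ x ∈ S, f x ∈ S) → (∀ x ∈ S, f (f x) = x) → (∀ x ∈ S, f x ≠ x) →
    Even S.card := by
  intro S
  induction S using Finset.strongInduction with
  | _ S ih =>
    intro hmem hinv hne
    rcases S.eq_empty_or_nonempty with rfl | ⟨x, hx⟩
    · simp
    · have hfx : f x ∈ S := hmem x hx
      have hxne : f x ≠ x := hne x hx
      have hfxm : f x ∈ S.erase x := Finset.mem_erase.mpr ⟨hxne, hfx⟩
      have hsub : (S.erase x).erase (f x) ⊆ S :=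
        (Finset.erase_subset _ _).trans (Finset.erase_subset _ _)
      have hxnot : x ∉ (S.erase x).erase (f x) := by
        simp [Finset.mem_erase]
      have hssub : (S.erase x).erase (f x) ⊂ S :=
        (Finset.ssubset_iff_of_subset hsub).mpr ⟨x, hx, hxnot⟩
      have hmem' : ∀ y ∈ (S.erase x).erase (f x), y ∈ S ∧ y ≠ x ∧ y ≠ f x := by
        intro y hy
        rw [Finset.mem_erase, Finset.mem_erase] at hy
        exact ⟨hy.2.2, hy.2.1, hy.1⟩
      have hE : Even ((S.erase x).erase (f x)).card := by
        refine ih _ hssub ?_ ?_ ?_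
        · intro y hy
          obtain ⟨hyS, hyx, hyfx⟩ := hmem' y hy
          rw [Finset.mem_erase, Finset.mem_erase]
          refine ⟨?_, ?_, hmem y hyS⟩
          · intro h; apply hyx; rw [← hinv y hyS, h, hinv x hx]
          · intro h; apply hyfx; rw [← hinv y hyS, h]
        · intro y hy; exact hinv y (hmem' y hy).1
        · intro y hy; exact hne y (hmem' y hy).1
      have hc1 : (S.erase x).card = S.card - 1 := Finset.card_erase_of_mem hx
      have hc2 : ((S.erase x).erase (f x)).card = (S.erase x).card - 1 :=
        Finset.card_erase_of_mem hfxm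
      have hx1 : 1 ≤ S.card := Finset.card_pos.mpr ⟨x, hx⟩
      have hx2 : 1 ≤ (S.erase x).card := Finset.card_pos.mpr ⟨f x, hfxm⟩
      rw [Nat.even_iff] at hE ⊢
      omega
theorem stmt11 (N : ℕ) (hN : 3 ≤ N) (σ : Equiv.Perm ℕ)
    (hfix : ∀ k, k = 0 ∨ N < k → σ k = k)
    (hinv : ∀ x, σ (σ x) = x)
    (hdiss : σ 1 = 1 ∧ σ N = N)
    (hmorse : ∀ j, 1 ≤ j → j ≤ N → 0 ≤ morse σ j)
    (hmeander : ∀ j k, 1 ≤ j → j < k → k < N → j % 2 = k % 2 →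
      ¬ ArcsCross (σ⁻¹ j) (σ⁻¹ (j + 1)) (σ⁻¹ k) (σ⁻¹ (k + 1)))
    (hnested : ∀ a b c d, TwoCycle σ a b → TwoCycle σ c d → (a, b) ≠ (c, d) →
      Intersecting a b c d → Nested a b c d)
    (hcentered : ∀ a b c d, TwoCycle σ a b → TwoCycle σ c d → a < c → d < b →
      Core σ a b = Core σ c d → (c - a : ℤ) = (b - d : ℤ))
    (hsep : ∀ a b c d, TwoCycle σ a b → TwoCycle σ c d → b < c →
      ∃ e, b < e ∧ e < c ∧ StableFix σ e) :
    ∃ m, 1 < m ∧ m < N ∧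
      ((σ (m - 1) + 1 = σ m ∧ σ m + 1 = σ (m + 1)) ∨
       (σ m + 1 = σ (m - 1) ∧ σ (m + 1) + 1 = σ m)) := by
  classical
  obtain ⟨h1, hNN⟩ := hdiss
  have h0 : σ 0 = 0 := hfix 0 (Or.inl rfl)
  have hsymm : ∀ x, σ⁻¹ x = σ x := by
    intro x
    conv_lhs => rw [← hinv x]
    exact Equiv.symm_apply_apply σ (σ x)
  have hub : ∀ x, x ≤ N → σ x ≤ N := by
    intro x hx
    by_contra h
    push_neg at h
    have h2 := hfix (σ x) (Or.inr h)
    have h3 := hinv x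
    rw [h2] at h3
    omega
  have hlb : ∀ x, 1 ≤ x → 1 ≤ σ x := by
    intro x hx
    by_contra h
    push_neg at h
    have h2 : σ x = 0 := by omega
    have h3 := hinv x
    rw [h2, h0] at h3
    omega
  -- ===================== parity lemma =====================
  have hpar : ∀ v, 1 ≤ v → v ≤ N → σ v % 2 = v % 2 := by
    have key : ∀ v, 1 ≤ v → v + 1 ≤ N → σ v % 2 ≠ σ (v + 1) % 2 := by
      intro v hv1 hvN
      have hvv : σ v ≠ σ (v + 1) := fun h => by have := σ.injective h; omega
      have hplb : 1 ≤ σ v := hlb v hv1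
      have hplb' : 1 ≤ σ (v + 1) := hlb _ (by omega)
      have hub1 : σ v ≤ N := hub v (by omega)
      have hub2 : σ (v + 1) ≤ N := hub _ hvN
      set p := min (σ v) (σ (v + 1)) with hpdef
      set q := max (σ v) (σ (v + 1)) with hqdef
      have hpq : p < q := by omega
      have noCross : ∀ j0, 1 ≤ j0 → j0 + 1 ≤ N → j0 % 2 = v % 2 → j0 ≠ v →
          ¬ ArcsCross (σ v) (σ (v + 1)) (σ j0) (σ (j0 + 1)) := by
        intro j0 h1' h2' h3' h4' hcross
        rcases Nat.lt_or_ge j0 v with h | h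
        · have hm := hmeander j0 v h1' h (by omega) h3'
          simp only [hsymm] at hm
          exact hm (by simp only [ArcsCross] at hcross ⊢; tauto)
        · have hlt : v < j0 := by omega
          have hm := hmeander v j0 hv1 hlt (by omega) h3'.symm
          simp only [hsymm] at hm
          exact hm hcross
      set f : ℕ → ℕ := fun r => σ (if σ r % 2 = v % 2 then σ r + 1 else σ r - 1)
        with hfdef
      have step : ∀ r, p < r → r < q →
          (p < f r ∧ f r < q) ∧ f (f r) = r ∧ f r ≠ r := by
        intro r hpr hrq
        have hr2 : 2 ≤ r := by omega
        have hrN : r + 1 ≤ N := by omega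
        have hur : σ (σ r) = r := hinv r
        have hu1 : 1 ≤ σ r := hlb r (by omega)
        have huN : σ r ≤ N := hub r (by omega)
        have hune1 : σ r ≠ 1 := by
          intro h
          have : σ 1 = r := by rw [← h]; exact hur
          rw [h1] at this
          omega
        have huneN : σ r ≠ N := by
          intro h
          have : σ N = r := by rw [← h]; exact hur
          rw [hNN] at this
          omega
        have hune_v : σ r ≠ v := by
          intro h
          have : σ v = r := by rw [← h]; exact hur
          omega
        have hune_v1 : σ r ≠ v + 1 := by
          intro h
          have : σ (v + 1) = r := by rw [← h]; exact hur
          omega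
        by_cases hc : σ r % 2 = v % 2
        · have hfr : f r = σ (σ r + 1) := by
            show σ (if σ r % 2 = v % 2 then σ r + 1 else σ r - 1) = σ (σ r + 1)
            rw [if_pos hc]
          have hnc := noCross (σ r) hu1 (by omega) hc hune_v
          rw [hur, ← hfr] at hnc
          have hne1 : f r ≠ σ v := by
            intro h
            rw [hfr] at h
            have := σ.injective h
            omega
          have hne2 : f r ≠ σ (v + 1) := by
            intro h
            rw [hfr] at h
            have := σ.injective h
            omega
          have hbnd : p < f r ∧ f r < q := by
            simp only [ArcsCross] at hnc
            omega
          refine ⟨hbnd, ?_, ?_⟩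
          · have h5 : σ (f r) = σ r + 1 := by rw [hfr]; exact hinv _
            have h6 : f (f r) =
                σ (if σ (f r) % 2 = v % 2 then σ (f r) + 1 else σ (f r) - 1) := rfl
            rw [h5] at h6
            rw [h6, if_neg (by omega)]
            have e : σ r + 1 - 1 = σ r := by omega
            rw [e, hur]
          · intro h
            rw [hfr] at h
            nth_rewrite 2 [← hur] at h
            have := σ.injective h
            omega
        · have hfr : f r = σ (σ r - 1) := by
            show σ (if σ r % 2 = v % 2 then σ r + 1 else σ r - 1) = σ (σ r - 1)
            rw [if_neg hc]
          have hnc := noCross (σ r - 1) (by omega) (by omega) (by omega) (by omega)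
          have e : σ r - 1 + 1 = σ r := by omega
          rw [e, hur, ← hfr] at hnc
          have hne1 : f r ≠ σ v := by
            intro h
            rw [hfr] at h
            have := σ.injective h
            omega
          have hne2 : f r ≠ σ (v + 1) := by
            intro h
            rw [hfr] at h
            have := σ.injective h
            omega
          have hbnd : p < f r ∧ f r < q := by
            simp only [ArcsCross] at hnc
            omega
          refine ⟨hbnd, ?_, ?_⟩
          · have h5 : σ (f r) = σ r - 1 := by rw [hfr]; exact hinv _
            have h6 : f (f r) =
                σ (if σ (f r) % 2 = v % 2 then σ (f r) + 1 else σ (f r) - 1) := rfl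
            rw [h5] at h6
            rw [h6, if_pos (by omega), e, hur]
          · intro h
            rw [hfr] at h
            nth_rewrite 2 [← hur] at h
            have := σ.injective h
            omega
      have heven : Even (Finset.Ioo p q).card := by
        refine even_card_of_inv f (Finset.Ioo p q) ?_ ?_ ?_
        · intro x hx
          rw [Finset.mem_Ioo] at hx ⊢
          exact (step x hx.1 hx.2).1
        · intro x hx
          rw [Finset.mem_Ioo] at hx
          exact (step x hx.1 hx.2).2.1
        · intro x hx
          rw [Finset.mem_Ioo] at hx
          exact (step x hx.1 hx.2).2.2
      rw [Nat.card_Ioo, Nat.even_iff] at heven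
      intro hcon
      omega
    intro v
    induction v with
    | zero => omega
    | succ n ih =>
      intro _ hvN
      rcases Nat.eq_zero_or_pos n with rfl | hn
      · norm_num [h1]
      · have hpn := ih (by omega) (by omega)
        have hk := key n (by omega) (by omega)
        omega
  -- ===================== main argument =====================
  by_cases hall : ∀ r, 1 ≤ r → r ≤ N → σ r = r
  · have h2 : σ 2 = 2 := hall 2 (by omega) (by omega)
    have h3 : σ 3 = 3 := hall 3 (by omega) hN
    exact ⟨2, by omega, by omega, Or.inl ⟨by norm_num [h1, h2], by norm_num [h2, h3]⟩⟩
  · push_neg at hall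
    obtain ⟨r, hr1, hrN, hrne⟩ := hall
    have hex : ∃ w, ∃ a b, TwoCycle σ a b ∧ b = a + w := by
      rcases Nat.lt_or_ge r (σ r) with h | h
      · exact ⟨σ r - r, r, σ r, ⟨h, rfl⟩, by omega⟩
      · have h' : σ r < r := by omega
        exact ⟨r - σ r, σ r, r, ⟨h', hinv r⟩, by omega⟩
    set w := Nat.find hex with hwdef
    obtain ⟨a, b, hab, hw⟩ := Nat.find_spec hex
    obtain ⟨hab1, hab2⟩ := hab
    have hminw : ∀ c d, c < d → σ c = d → w ≤ d - c := by
      intro c d h1' h2'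
      exact Nat.find_min' hex ⟨c, d, ⟨h1', h2'⟩, by omega⟩
    have hba : σ b = a := by rw [← hab2]; exact hinv a
    -- basic facts about a, b
    have haN : a ≤ N := by
      by_contra h
      push_neg at h
      have := hfix a (Or.inr h)
      omega
    have ha1 : 1 ≤ a := by
      by_contra h
      push_neg at h
      have ha0 : a = 0 := by omega
      rw [ha0, h0] at hab2
      omega
    have ha2 : 2 ≤ a := by
      rcases Nat.lt_or_ge a 2 with h | h
      · have : a = 1 := by omega
        rw [this, h1] at hab2
        omega
      · exact h
    have hbN : b ≤ N := by rw [← hab2]; exact hub a haN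
    have hbN1 : b ≤ N - 1 := by
      rcases Nat.lt_or_ge b N with h | h
      · omega
      · have hbb : b = N := by omega
        rw [hbb, ← hNN] at hab2
        have := σ.injective hab2
        omega
    have hpab : a % 2 = b % 2 := by
      have := hpar a (by omega) haN
      rw [hab2] at this
      omega
    -- interior of the minimal 2-cycle is fixed
    have hint : ∀ p, a < p → p < b → σ p = p := by
      intro p hap hpb
      by_contra hpne
      obtain ⟨q, hq⟩ : ∃ q, σ p = q := ⟨σ p, rfl⟩
      have hsp : σ q = p := by rw [← hq]; exact hinv p
      have hqp : q ≠ p := by rw [← hq]; exact fun h => hpne h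
      have hqa : q ≠ a := by
        intro h
        rw [h, hab2] at hsp
        omega
      have hqb : q ≠ b := by
        intro h
        rw [h, hba] at hsp
        omega
      rcases Nat.lt_or_ge q a with hqlt | hge
      · -- q < a : cycle (q, p) pokes out on the left; forces p = a + 1
        have hpa : p = a + 1 := by
          by_contra hne'
          have hp2 : a + 2 ≤ p := by omega
          have hI : Intersecting a b q p :=
            ⟨a + 1, Set.mem_inter (Set.mem_Ioo.mpr ⟨by omega, by omega⟩)
              (Set.mem_Ioo.mpr ⟨by omega, by omega⟩)⟩
          have hn := hnested a b q p ⟨hab1, hab2⟩ ⟨by omega, hsp⟩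
            (by intro hpair; rw [Prod.mk.injEq] at hpair; omega) hI
          rcases hn with ⟨h1', h2'⟩ | ⟨h1', h2'⟩ <;> omega
        subst hpa
        -- meander arcs j = a, k = b
        have hnc := hmeander a b (by omega) hab1 (by omega) hpab
        simp only [hsymm] at hnc
        rw [hab2, hq, hba] at hnc
        obtain ⟨t, ht⟩ : ∃ t, σ (b + 1) = t := ⟨σ (b + 1), rfl⟩
        rw [ht] at hnc
        have hst : σ t = b + 1 := by rw [← ht]; exact hinv (b + 1)
        have htq : t ≠ q := by
          intro h
          rw [h, hsp] at hst
          omega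
        have hta : t ≠ a := by
          intro h
          rw [h, hab2] at hst
          omega
        have htb : t ≠ b := by
          intro h
          rw [h, hba] at hst
          omega
        have htr : q < t ∧ t < b := by
          simp only [ArcsCross] at hnc
          omega
        rcases Nat.lt_or_ge t a with htlt | htge
        · -- t < a : two linked short cycles (q, a+1) and (t, b+1)
          have hI : Intersecting q (a + 1) t (b + 1) :=
            ⟨a, Set.mem_inter (Set.mem_Ioo.mpr ⟨by omega, by omega⟩)
              (Set.mem_Ioo.mpr ⟨by omega, by omega⟩)⟩
          have hn := hnested q (a + 1) t (b + 1) ⟨by omega, hsp⟩ ⟨by omega, hst⟩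
            (by intro hpair; rw [Prod.mk.injEq] at hpair; omega) hI
          rcases hn with ⟨h1', h2'⟩ | ⟨h1', h2'⟩ <;> omega
        · -- a < t < b : contradicts minimality
          have hm := hminw t (b + 1) (by omega) hst
          have hta1 : t = a + 1 := by omega
          rw [hta1, hq] at hst
          omega
      · rcases Nat.lt_or_ge q b with hqb2 | hgeb
        · -- a < q < b : strictly smaller cycle inside, contradicts minimality
          rcases Nat.lt_or_ge p q with h | h
          · have := hminw p q h hq
            omega
          · have := hminw q p (by omega) hsp
            omega
        · -- q > b : cycle (p, q) pokes out on the right; forces p = b - 1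
          have hqgt : b < q := by omega
          have hpb1 : p = b - 1 := by
            by_contra hne'
            have hp2 : p ≤ b - 2 := by omega
            have hI : Intersecting a b p q :=
              ⟨p + 1, Set.mem_inter (Set.mem_Ioo.mpr ⟨by omega, by omega⟩)
                (Set.mem_Ioo.mpr ⟨by omega, by omega⟩)⟩
            have hn := hnested a b p q ⟨hab1, hab2⟩ ⟨by omega, hq⟩
              (by intro hpair; rw [Prod.mk.injEq] at hpair; omega) hI
            rcases hn with ⟨h1', h2'⟩ | ⟨h1', h2'⟩ <;> omega
          -- meander arcs j = a - 1, k = b - 1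
          have hnc := hmeander (a - 1) (b - 1) (by omega) (by omega) (by omega)
            (by omega)
          simp only [hsymm] at hnc
          have e1 : a - 1 + 1 = a := by omega
          have e2 : b - 1 + 1 = b := by omega
          have e3 : σ (b - 1) = q := by rw [← hpb1]; exact hq
          rw [e1, e2, hab2, hba, e3] at hnc
          obtain ⟨z, hz⟩ : ∃ z, σ (a - 1) = z := ⟨σ (a - 1), rfl⟩
          rw [hz] at hnc
          have hsz : σ z = a - 1 := by rw [← hz]; exact hinv (a - 1)
          have hza : z ≠ a := by
            intro h
            rw [h, hab2] at hsz
            omega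
          have hzb : z ≠ b := by
            intro h
            rw [h, hba] at hsz
            omega
          have hzq : z ≠ q := by
            intro h
            rw [h, hsp] at hsz
            omega
          have hzr : a < z ∧ z < q := by
            simp only [ArcsCross] at hnc
            omega
          rcases Nat.lt_or_ge z b with hzlt | hzge
          · -- a < z < b : contradicts minimality
            have hm := hminw (a - 1) z (by omega) hz
            have hzp : z = b - 1 := by omega
            rw [hzp, e3] at hsz
            omega
          · -- z > b : two linked cycles (a-1, z) and (b-1, q)
            have hI : Intersecting (a - 1) z (b - 1) q :=
              ⟨b, Set.mem_inter (Set.mem_Ioo.mpr ⟨by omega, by omega⟩)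
                (Set.mem_Ioo.mpr ⟨by omega, by omega⟩)⟩
            have hn := hnested (a - 1) z (b - 1) q ⟨by omega, hz⟩ ⟨by omega, e3⟩
              (by intro hpair; rw [Prod.mk.injEq] at hpair; omega) hI
            rcases hn with ⟨h1', h2'⟩ | ⟨h1', h2'⟩ <;> omega
    -- width is even and at least 2
    have hw2 : 2 ≤ w ∧ w % 2 = 0 := by
      constructor <;> omega
    rcases Nat.lt_or_ge w 3 with hws | hwl
    · -- w = 2 : descending triple at m = a + 1
      have hwe : w = 2 := by omega
      have hm1 : σ (a + 1) = a + 1 := hint (a + 1) (by omega) (by omega)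
      refine ⟨a + 1, by omega, by omega, Or.inr ⟨?_, ?_⟩⟩
      · have e : a + 1 - 1 = a := by omega
        rw [e, hm1, hab2]
        omega
      · have e : a + 1 + 1 = b := by omega
        rw [e, hm1, hba]
    · -- w ≥ 4 : ascending triple at m = a + 2
      have hw4 : 4 ≤ w := by omega
      have hm1 : σ (a + 1) = a + 1 := hint (a + 1) (by omega) (by omega)
      have hm2 : σ (a + 2) = a + 2 := hint (a + 2) (by omega) (by omega)
      have hm3 : σ (a + 3) = a + 3 := hint (a + 3) (by omega) (by omega)
      refine ⟨a + 2, by omega, by omega, Or.inl ⟨?_, ?_⟩⟩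
      · have e : a + 2 - 1 = a + 1 := by omega
        rw [e, hm1, hm2]
      · have e : a + 2 + 1 = a + 3 := by omega
        rw [e, hm2, hm3]
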